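/- (Micchelli's Lemma) Let x₁,…,xₙ ∈ ℝ^d and c₁,…,cₙ ∈ ℝ satisfy ∑ᵢ cᵢ p(xᵢ) = 0 for all polynomials p of total degree < k. Then (−1)^k ∑ᵢ ∑ⱼ cᵢcⱼ ‖xᵢ−xⱼ‖^(2k) ≥ 0. -/

import Mathlib

open MvPolynomial Finset

lemma micchelli_swap_sums {ι : Type*} [Fintype ι] (s : Finset ℕ) (r : ℕ → Finset ℕ)
    (F : ι → ι → ℕ → ℕ → ℝ) :
    ∑ i, ∑ j, ∑ e ∈ s, ∑ a ∈ r e, F i j e a = ∑ e ∈ s, ∑ a ∈ r e, ∑ i, ∑ j, F i j e a :=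
  calc ∑ i, ∑ j, ∑ e ∈ s, ∑ a ∈ r e, F i j e a
      = ∑ i, ∑ e ∈ s, ∑ j, ∑ a ∈ r e, F i j e a :=
        Finset.sum_congr rfl fun _ _ => Finset.sum_comm
    _ = ∑ e ∈ s, ∑ i, ∑ j, ∑ a ∈ r e, F i j e a := Finset.sum_comm
    _ = ∑ e ∈ s, ∑ i, ∑ a ∈ r e, ∑ j, F i j e a :=
        Finset.sum_congr rfl fun _ _ => Finset.sum_congr rfl fun _ _ => Finset.sum_comm
    _ = ∑ e ∈ s, ∑ a ∈ r e, ∑ i, ∑ j, F i j e a :=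
        Finset.sum_congr rfl fun _ _ => Finset.sum_comm

lemma micchelli_gram_pow_nonneg {n d : ℕ} (m : ℕ) (b : Fin n → ℝ) (v : Fin n → Fin d → ℝ) :
    0 ≤ ∑ i, ∑ j, b i * b j * (∑ l, v i l * v j l) ^ m := by
  have key : ∀ i j : Fin n, b i * b j * (∑ l, v i l * v j l) ^ m
      = ∑ f : Fin m → Fin d, (b i * ∏ r, v i (f r)) * (b j * ∏ r, v j (f r)) := by
    intro i j
    rw [Fintype.sum_pow, Finset.mul_sum]
    refine Finset.sum_congr rfl fun f _ => ?_
    rw [Finset.prod_mul_distrib]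
    ring
  simp_rw [key]
  have swap : ∑ i, ∑ j, ∑ f : Fin m → Fin d, (b i * ∏ r, v i (f r)) * (b j * ∏ r, v j (f r))
      = ∑ f : Fin m → Fin d, ∑ i, ∑ j, (b i * ∏ r, v i (f r)) * (b j * ∏ r, v j (f r)) :=
    calc ∑ i, ∑ j, ∑ f : Fin m → Fin d, (b i * ∏ r, v i (f r)) * (b j * ∏ r, v j (f r))
        = ∑ i, ∑ f : Fin m → Fin d, ∑ j, (b i * ∏ r, v i (f r)) * (b j * ∏ r, v j (f r)) :=
          Finset.sum_congr rfl fun _ _ => Finset.sum_comm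
      _ = _ := Finset.sum_comm
  rw [swap]
  refine Finset.sum_nonneg fun f _ => ?_
  rw [← Finset.sum_mul_sum]
  exact mul_self_nonneg _

/-- Micchelli's Lemma: if `∑ᵢ cᵢ p(xᵢ) = 0` for all polynomials `p` of total degree `< k`,
then `(−1)^k ∑ᵢ∑ⱼ cᵢcⱼ ‖xᵢ−xⱼ‖^(2k) ≥ 0`. -/
theorem micchelli_lemma (d n k : ℕ) (x : Fin n → EuclideanSpace ℝ (Fin d)) (c : Fin n → ℝ)
    (h : ∀ p : MvPolynomial (Fin d) ℝ, p.totalDegree < k →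
      ∑ i, c i * MvPolynomial.eval (x i) p = 0) :
    0 ≤ (-1 : ℝ) ^ k * ∑ i, ∑ j, c i * c j * ‖x i - x j‖ ^ (2 * k) := by
  set A : Fin n → ℝ := fun i => ∑ l, x i l * x i l with hA_def
  set t : Fin n → Fin n → ℝ := fun i j => ∑ l, x i l * x j l with ht_def
  -- norm identity
  have hnorm : ∀ i j, ‖x i - x j‖ ^ (2 * k) = (A i + A j + (-2) * t i j) ^ k := by
    intro i j
    rw [pow_mul]
    congr 1
    have hAi : ∀ i, ‖x i‖ ^ 2 = A i := by
      intro i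
      rw [← real_inner_self_eq_norm_sq]
      simp only [hA_def, PiLp.inner_apply, RCLike.inner_apply, conj_trivial]
    have hinner : (inner ℝ (x i) (x j) : ℝ) = t i j := by
      simp only [ht_def, PiLp.inner_apply, RCLike.inner_apply, conj_trivial, mul_comm]
    rw [norm_sub_sq_real, hAi, hAi, hinner]
    ring
  -- first vanishing lemma
  have hzero1 : ∀ (j : Fin n) (a m : ℕ), 2 * a + m < k →
      ∑ i, c i * (A i ^ a * t i j ^ m) = 0 := by
    intro j a m ham
    have hdeg : (((∑ l, (X l * X l : MvPolynomial (Fin d) ℝ)) ^ a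
        * (∑ l, X l * C (x j l)) ^ m)).totalDegree < k := by
      refine lt_of_le_of_lt (le_trans (totalDegree_mul _ _) (add_le_add ?_ ?_)) ham
      · refine le_trans (totalDegree_pow _ _) ?_
        rw [mul_comm 2 a]
        refine Nat.mul_le_mul_left a (totalDegree_finsetSum_le fun l _ => ?_)
        refine le_trans (totalDegree_mul _ _) ?_
        simp [totalDegree_X]
      · refine le_trans (totalDegree_pow _ _) ?_
        nth_rewrite 2 [← mul_one m]
        refine Nat.mul_le_mul_left m (totalDegree_finsetSum_le fun l _ => ?_)
        refine le_trans (totalDegree_mul _ _) ?_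
        simp [totalDegree_X, totalDegree_C]
    have h0 := h _ hdeg
    calc ∑ i, c i * (A i ^ a * t i j ^ m)
        = ∑ i, c i * MvPolynomial.eval (x i)
            ((∑ l, (X l * X l : MvPolynomial (Fin d) ℝ)) ^ a * (∑ l, X l * C (x j l)) ^ m) := by
          refine Finset.sum_congr rfl fun i _ => ?_
          simp [hA_def, ht_def]
      _ = 0 := h0
  -- second vanishing lemma
  have hzero2 : ∀ (i : Fin n) (b m : ℕ), 2 * b + m < k →
      ∑ j, c j * (A j ^ b * t i j ^ m) = 0 := by
    intro i b m hbm
    have hdeg : (((∑ l, (X l * X l : MvPolynomial (Fin d) ℝ)) ^ b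
        * (∑ l, C (x i l) * X l) ^ m)).totalDegree < k := by
      refine lt_of_le_of_lt (le_trans (totalDegree_mul _ _) (add_le_add ?_ ?_)) hbm
      · refine le_trans (totalDegree_pow _ _) ?_
        rw [mul_comm 2 b]
        refine Nat.mul_le_mul_left b (totalDegree_finsetSum_le fun l _ => ?_)
        refine le_trans (totalDegree_mul _ _) ?_
        simp [totalDegree_X]
      · refine le_trans (totalDegree_pow _ _) ?_
        nth_rewrite 2 [← mul_one m]
        refine Nat.mul_le_mul_left m (totalDegree_finsetSum_le fun l _ => ?_)
        refine le_trans (totalDegree_mul _ _) ?_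
        simp [totalDegree_X, totalDegree_C]
    have h0 := h _ hdeg
    calc ∑ j, c j * (A j ^ b * t i j ^ m)
        = ∑ j, c j * MvPolynomial.eval (x j)
            ((∑ l, (X l * X l : MvPolynomial (Fin d) ℝ)) ^ b * (∑ l, C (x i l) * X l) ^ m) := by
          refine Finset.sum_congr rfl fun j _ => ?_
          simp [hA_def, ht_def]
      _ = 0 := h0
  -- binomial expansion
  have expand : ∀ i j, c i * c j * ‖x i - x j‖ ^ (2 * k)
      = ∑ e ∈ range (k + 1), ∑ a ∈ range (e + 1),
          ((k.choose e : ℝ) * (e.choose a) * (-2) ^ (k - e))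
            * ((c i * A i ^ a * t i j ^ (k - e)) * (c j * A j ^ (e - a))) := by
    intro i j
    rw [hnorm i j]
    simp only [add_pow]
    rw [Finset.mul_sum]
    refine Finset.sum_congr rfl fun e _ => ?_
    rw [Finset.sum_mul, Finset.sum_mul, Finset.mul_sum]
    refine Finset.sum_congr rfl fun a _ => ?_
    ring
  simp_rw [expand]
  rw [micchelli_swap_sums]
  rw [Finset.mul_sum]
  refine Finset.sum_nonneg fun e he => ?_
  rw [Finset.mul_sum]
  refine Finset.sum_nonneg fun a ha => ?_
  rw [mem_range] at he ha
  rcases lt_trichotomy (2 * a) e with hlt | heq | hgt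
  · -- 2a < e : inner sum over i vanishes
    have hT : ∑ i, ∑ j, ((k.choose e : ℝ) * (e.choose a) * (-2) ^ (k - e))
        * ((c i * A i ^ a * t i j ^ (k - e)) * (c j * A j ^ (e - a))) = 0 := by
      rw [Finset.sum_comm]
      refine Finset.sum_eq_zero fun j _ => ?_
      have h0 := hzero1 j a (k - e) (by omega)
      calc ∑ i, ((k.choose e : ℝ) * (e.choose a) * (-2) ^ (k - e))
            * ((c i * A i ^ a * t i j ^ (k - e)) * (c j * A j ^ (e - a)))
          = (((k.choose e : ℝ) * (e.choose a) * (-2) ^ (k - e)) * (c j * A j ^ (e - a)))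
              * ∑ i, c i * (A i ^ a * t i j ^ (k - e)) := by
            rw [Finset.mul_sum]
            exact Finset.sum_congr rfl fun i _ => by ring
        _ = 0 := by rw [h0, mul_zero]
    rw [hT, mul_zero]
  · -- 2a = e : nonnegative term
    have hae : e - a = a := by omega
    have hT : ∑ i, ∑ j, ((k.choose e : ℝ) * (e.choose a) * (-2) ^ (k - e))
        * ((c i * A i ^ a * t i j ^ (k - e)) * (c j * A j ^ (e - a)))
        = ((k.choose e : ℝ) * (e.choose a) * (-2) ^ (k - e))
          * ∑ i, ∑ j, (c i * A i ^ a) * (c j * A j ^ a) * (∑ l, x i l * x j l) ^ (k - e) := by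
      rw [Finset.mul_sum]
      refine Finset.sum_congr rfl fun i _ => ?_
      rw [Finset.mul_sum]
      refine Finset.sum_congr rfl fun j _ => ?_
      rw [hae]
      simp only [ht_def]
      ring
    rw [hT]
    have hg := micchelli_gram_pow_nonneg (k - e) (fun i => c i * A i ^ a) (fun i l => x i l)
    have hsign : (-1 : ℝ) ^ k * ((k.choose e : ℝ) * (e.choose a) * (-2) ^ (k - e))
        = (k.choose e : ℝ) * (e.choose a) * 2 ^ (k - e) := by
      rw [show ((-2 : ℝ)) = (-1) * 2 by norm_num, mul_pow, show (-1 : ℝ) ^ k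
        * ((k.choose e : ℝ) * (e.choose a) * ((-1) ^ (k - e) * 2 ^ (k - e)))
        = ((-1 : ℝ) ^ (k + (k - e))) * ((k.choose e : ℝ) * (e.choose a) * 2 ^ (k - e)) from by
          rw [pow_add]; ring]
      rw [show k + (k - e) = 2 * (k - a) by omega, pow_mul]
      norm_num
    rw [← mul_assoc, hsign]
    refine mul_nonneg (by positivity) ?_
    exact hg
  · -- e < 2a : inner sum over j vanishes
    have hT : ∑ i, ∑ j, ((k.choose e : ℝ) * (e.choose a) * (-2) ^ (k - e))
        * ((c i * A i ^ a * t i j ^ (k - e)) * (c j * A j ^ (e - a))) = 0 := by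
      refine Finset.sum_eq_zero fun i _ => ?_
      have h0 := hzero2 i (e - a) (k - e) (by omega)
      calc ∑ j, ((k.choose e : ℝ) * (e.choose a) * (-2) ^ (k - e))
            * ((c i * A i ^ a * t i j ^ (k - e)) * (c j * A j ^ (e - a)))
          = (((k.choose e : ℝ) * (e.choose a) * (-2) ^ (k - e)) * (c i * A i ^ a))
              * ∑ j, c j * (A j ^ (e - a) * t i j ^ (k - e)) := by
            rw [Finset.mul_sum]
            exact Finset.sum_congr rfl fun j _ => by ring
        _ = 0 := by rw [h0, mul_zero]
    rw [hT, mul_zero]
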